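/- Let F₁, F₂ be points in the Euclidean plane and set f = dist F₁ F₂ / 2. Let a₁, a₂ be positive real numbers with 2f ≤ a₁ and 2f ≤ a₂ (so that both ellipses below have eccentricity at most 1/2), and let E₁ = {P : dist P F₁ + dist P F₂ = 2a₁} and E₂ = {P : dist P F₁ + dist P F₂ = 2a₂}. Then the Hausdorff distance between E₁ and E₂ satisfies d_H(E₁, E₂) ≤ 2·|a₂ − a₁|. -/

import Mathlib

open Metric Set

/-- Key growth lemma: along a ray `t ↦ t•u - v` (`u` unit), the function
`G t = t + ‖t•u - v‖` grows at rate at least `1` past any point `s ≥ 0`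
where `G s ≥ 2‖v‖`. -/
lemma key_growth {E : Type*} [NormedAddCommGroup E] [InnerProductSpace ℝ E]
    (u v : E) (hu : ‖u‖ = 1) {s t : ℝ} (hs0 : 0 ≤ s) (hst : s ≤ t)
    (hG : 2 * ‖v‖ ≤ s + ‖s • u - v‖) :
    t - s ≤ (t + ‖t • u - v‖) - (s + ‖s • u - v‖) := by
  set τ : ℝ := inner ℝ u v with hτdef
  have hτ : τ ≤ ‖v‖ := by
    calc τ ≤ ‖u‖ * ‖v‖ := real_inner_le_norm u v
    _ = ‖v‖ := by rw [hu, one_mul]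
  have exp : ∀ r : ℝ, ‖r • u - v‖ ^ 2 = r ^ 2 - 2 * r * τ + ‖v‖ ^ 2 := by
    intro r
    rw [@norm_sub_sq_real, norm_smul, real_inner_smul_left]
    simp [hu]
    ring
  have hsτ : τ ≤ s := by
    by_contra h
    push_neg at h
    have hτpos : 0 < τ := lt_of_le_of_lt hs0 h
    have h1 : ‖s • u - v‖ ^ 2 ≤ ‖v‖ ^ 2 := by
      rw [exp s]; nlinarith
    have h2 : ‖s • u - v‖ ≤ ‖v‖ := by
      nlinarith [norm_nonneg (s • u - v), norm_nonneg v]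
    have : ‖v‖ ≤ s := by linarith
    linarith
  have h3 : ‖s • u - v‖ ^ 2 ≤ ‖t • u - v‖ ^ 2 := by
    rw [exp s, exp t]; nlinarith
  have h4 : ‖s • u - v‖ ≤ ‖t • u - v‖ := by
    nlinarith [norm_nonneg (s • u - v), norm_nonneg (t • u - v)]
  linarith

/-- For every point on an ellipse with eccentricity ≤ 1/2, there is a point on a
confocal ellipse (also ecc ≤ 1/2) at distance at most twice the difference of
semi-major axes. -/
lemma exists_near_point (F₁ F₂ : EuclideanSpace ℝ (Fin 2)) (f a₁ a₂ : ℝ)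
    (hf : f = dist F₁ F₂ / 2)
    (ha₁ : 0 < a₁) (ha₂ : 0 < a₂)
    (he₁ : 2 * f ≤ a₁) (he₂ : 2 * f ≤ a₂)
    (P : EuclideanSpace ℝ (Fin 2)) (hP : dist P F₁ + dist P F₂ = 2 * a₁) :
    ∃ Q : EuclideanSpace ℝ (Fin 2),
      dist Q F₁ + dist Q F₂ = 2 * a₂ ∧ dist P Q ≤ 2 * |a₂ - a₁| := by
  have hf0 : 0 ≤ f := by rw [hf]; positivity
  set t₀ : ℝ := dist P F₁ with ht₀def
  have ht₀pos : 0 < t₀ := by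
    rcases (dist_nonneg : (0:ℝ) ≤ dist P F₁).lt_or_eq with h | h
    · exact h
    · exfalso
      have hPF₁ : P = F₁ := dist_eq_zero.mp h.symm
      have hd2 : dist P F₂ = 2 * a₁ := by
        have ht0 : t₀ = 0 := h.symm
        linarith [hP, ht0]
      rw [hPF₁] at hd2
      have hfa : f = a₁ := by rw [hf, hd2]; ring
      linarith
  set v : EuclideanSpace ℝ (Fin 2) := F₂ - F₁ with hvdef
  have hv : ‖v‖ = 2 * f := by
    rw [hvdef, hf, ← dist_eq_norm, dist_comm]; ring
  set u : EuclideanSpace ℝ (Fin 2) := t₀⁻¹ • (P - F₁) with hudef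
  have hPF₁norm : ‖P - F₁‖ = t₀ := by rw [ht₀def, dist_eq_norm]
  have hu : ‖u‖ = 1 := by
    rw [hudef, norm_smul, hPF₁norm, Real.norm_eq_abs,
      abs_of_pos (inv_pos.mpr ht₀pos)]
    field_simp
  have ht₀u : t₀ • u = P - F₁ := by
    rw [hudef, smul_smul]
    rw [mul_inv_cancel₀ (ne_of_gt ht₀pos), one_smul]
  set G : ℝ → ℝ := fun t => t + ‖t • u - v‖ with hGdef
  have hGcont : Continuous G := by
    apply Continuous.add continuous_id
    exact (Continuous.sub (continuous_id.smul continuous_const) continuous_const).norm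
  have hdistQ : ∀ t : ℝ, dist (F₁ + t • u) F₂ = ‖t • u - v‖ := by
    intro t
    rw [dist_eq_norm, hvdef]
    congr 1
    abel
  have hdistQ₁ : ∀ t : ℝ, dist (F₁ + t • u) F₁ = |t| := by
    intro t
    rw [dist_eq_norm]
    have : F₁ + t • u - F₁ = t • u := by abel
    rw [this, norm_smul, hu, Real.norm_eq_abs, mul_one]
  have hdistPQ : ∀ t : ℝ, dist P (F₁ + t • u) = |t₀ - t| := by
    intro t
    rw [dist_eq_norm]
    have : P - (F₁ + t • u) = t₀ • u - t • u := by rw [ht₀u]; abel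
    rw [this, ← sub_smul, norm_smul, hu, Real.norm_eq_abs, mul_one]
  have hGt₀ : G t₀ = 2 * a₁ := by
    rw [hGdef]
    simp only
    rw [ht₀u]
    have : ‖P - F₁ - v‖ = dist P F₂ := by
      rw [hvdef, dist_eq_norm]
      congr 1
      abel
    rw [this]
    exact hP
  have hG0 : G 0 = 2 * f := by
    rw [hGdef]
    simp [hv]
  rcases le_or_gt a₁ a₂ with hle | hlt
  · -- move outward
    set T : ℝ := t₀ + 2 * (a₂ - a₁) with hTdef
    have hT : t₀ ≤ T := by rw [hTdef]; linarith
    have hkey : T - t₀ ≤ G T - G t₀ :=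
      key_growth u v hu (le_of_lt ht₀pos) hT
        (by show 2 * ‖v‖ ≤ G t₀; rw [hGt₀, hv]; linarith)
    have hGT : 2 * a₂ ≤ G T := by
      have : T - t₀ = 2 * (a₂ - a₁) := by rw [hTdef]; ring
      rw [this] at hkey
      rw [hGt₀] at hkey
      linarith
    have hIVT := intermediate_value_Icc hT hGcont.continuousOn
    have hmem : (2 * a₂ : ℝ) ∈ Icc (G t₀) (G T) := by
      constructor
      · rw [hGt₀]; linarith
      · exact hGT
    obtain ⟨t₁, ht₁mem, ht₁⟩ := hIVT hmem
    refine ⟨F₁ + t₁ • u, ?_, ?_⟩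
    · rw [hdistQ₁, hdistQ, abs_of_nonneg (le_trans (le_of_lt ht₀pos) ht₁mem.1)]
      exact ht₁
    · rw [hdistPQ]
      rw [abs_of_nonpos (by linarith [ht₁mem.1])]
      rw [abs_of_nonneg (by linarith : (0:ℝ) ≤ a₂ - a₁)]
      linarith [ht₁mem.2]
  · -- move inward
    have h0t₀ : (0:ℝ) ≤ t₀ := le_of_lt ht₀pos
    have hIVT := intermediate_value_Icc h0t₀ hGcont.continuousOn
    have hmem : (2 * a₂ : ℝ) ∈ Icc (G 0) (G t₀) := by
      constructor
      · rw [hG0]; linarith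
      · rw [hGt₀]; linarith
    obtain ⟨t₁, ht₁mem, ht₁⟩ := hIVT hmem
    have hkey : t₀ - t₁ ≤ G t₀ - G t₁ :=
      key_growth u v hu ht₁mem.1 ht₁mem.2
        (by show 2 * ‖v‖ ≤ G t₁; rw [ht₁, hv]; linarith)
    refine ⟨F₁ + t₁ • u, ?_, ?_⟩
    · rw [hdistQ₁, hdistQ, abs_of_nonneg ht₁mem.1]
      exact ht₁
    · rw [hdistPQ]
      rw [abs_of_nonneg (by linarith [ht₁mem.2])]
      rw [abs_of_nonpos (by linarith : a₂ - a₁ ≤ 0)]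
      rw [hGt₀, ht₁] at hkey
      linarith

/-- Confocal ellipses of eccentricity at most `1/2` are at Hausdorff distance at most
twice the difference of their semi-major axes. -/
theorem hausdorffDist_confocal_ellipses_le
    (F₁ F₂ : EuclideanSpace ℝ (Fin 2)) (f a₁ a₂ : ℝ)
    (hf : f = dist F₁ F₂ / 2)
    (ha₁ : 0 < a₁) (ha₂ : 0 < a₂)
    (he₁ : 2 * f ≤ a₁) (he₂ : 2 * f ≤ a₂) :
    Metric.hausdorffDist
        {P : EuclideanSpace ℝ (Fin 2) | dist P F₁ + dist P F₂ = 2 * a₁}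
        {P : EuclideanSpace ℝ (Fin 2) | dist P F₁ + dist P F₂ = 2 * a₂}
      ≤ 2 * |a₂ - a₁| := by
  apply Metric.hausdorffDist_le_of_mem_dist (by positivity)
  · intro P hP
    obtain ⟨Q, hQ, hd⟩ := exists_near_point F₁ F₂ f a₁ a₂ hf ha₁ ha₂ he₁ he₂ P hP
    exact ⟨Q, hQ, hd⟩
  · intro P hP
    obtain ⟨Q, hQ, hd⟩ := exists_near_point F₁ F₂ f a₂ a₁ hf ha₂ ha₁ he₂ he₁ P hP
    exact ⟨Q, hQ, by rwa [abs_sub_comm] at hd⟩
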